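/- Let C₊ = (ℕ,+) be the free commutative monoid on one generator τ, and let M be a C₊-module, i.e., a set M with a map t : M → M giving the action of τ. Then M is flat as a C₊-module if and only if t is injective (i.e., τ·m = τ·m′ implies m = m′ for all m, m′ ∈ M). -/

import Mathlib

/-- The elementary relation `(a • m, n) ∼ (m, a • n)` generating the tensor product of two
modules over a commutative monoid `A`. -/
def MonTensor.Rel (A : Type*) [CommMonoid A] (M N : Type*) [MulAction A M] [MulAction A N] :
    M × N → M × N → Prop :=
  fun p q => ∃ (a : A) (m : M) (n : N), p = (a • m, n) ∧ q = (m, a • n)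

/-- The tensor product `M ⊗_A N` of two modules over a commutative monoid `A`: the quotient
of `M × N` by the equivalence relation generated by `(a • m, n) ∼ (m, a • n)`. -/
def MonTensor (A : Type*) [CommMonoid A] (M N : Type*) [MulAction A M] [MulAction A N] :=
  Quot (MonTensor.Rel A M N)

/-- The map `F ⊗_A M → F ⊗_A N` induced by an `A`-equivariant map `f : M → N`. -/
def MonTensor.map (A : Type*) [CommMonoid A] {F M N : Type*}
    [MulAction A F] [MulAction A M] [MulAction A N]
    (f : M → N) (hf : ∀ (a : A) (m : M), f (a • m) = a • f m) :
    MonTensor A F M → MonTensor A F N :=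
  Quot.map (fun p => (p.1, f p.2)) (by
    rintro p q ⟨a, m, n, h1, h2⟩
    subst h1; subst h2
    exact ⟨a, m, f n, rfl, by simp [hf]⟩)

/-- A module `F` over a commutative monoid `A` is flat if for every injective
`A`-equivariant map `M → N` the induced map `F ⊗_A M → F ⊗_A N` is injective. -/
def MonIsFlat (A : Type*) [CommMonoid A] (F : Type*) [MulAction A F] : Prop :=
  ∀ (M N : Type*) (_ : MulAction A M) (_ : MulAction A N)
    (f : M → N) (hf : ∀ (a : A) (m : M), f (a • m) = a • f m),
    Function.Injective f → Function.Injective (MonTensor.map A (F := F) f hf)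

/-- The `C₊ = (ℕ,+)`-module structure on a set `M` determined by a self-map
`t : M → M` as the action of the generator `τ`. -/
def natAction (M : Type*) (t : M → M) : MulAction (Multiplicative ℕ) M where
  smul n m := t^[n.toAdd] m
  one_smul m := by
    show t^[Multiplicative.toAdd 1] m = m
    simp
  mul_smul x y m := by
    show t^[Multiplicative.toAdd (x * y)] m =
      t^[Multiplicative.toAdd x] (t^[Multiplicative.toAdd y] m)
    rw [toAdd_mul, Function.iterate_add_apply]

section helpers

open Multiplicative Function Relation

private lemma smul_iter' {N : Type*} [MulAction (Multiplicative ℕ) N] (k : ℕ) (n : N) :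
    (ofAdd k) • n = (fun x => (ofAdd 1 : Multiplicative ℕ) • x)^[k] n := by
  induction k with
  | zero => simpa using one_smul (Multiplicative ℕ) n
  | succ k ih =>
    rw [iterate_succ_apply', ← ih, ← mul_smul, ← ofAdd_add, Nat.add_comm]

private lemma smul_iter {N : Type*} [MulAction (Multiplicative ℕ) N] (a : Multiplicative ℕ)
    (n : N) : a • n = (fun x => (ofAdd 1 : Multiplicative ℕ) • x)^[a.toAdd] n := by
  conv_lhs => rw [← ofAdd_toAdd a]
  exact smul_iter' _ n

/-- Characterization of the equivalence relation generated by the tensor relation on `F × N`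
when `t` is injective. -/
private lemma eqvGen_char {F : Type*} (t : F → F) (ht : Function.Injective t)
    {N : Type*} [iN : MulAction (Multiplicative ℕ) N]
    {p q : F × N}
    (h : Relation.EqvGen (@MonTensor.Rel (Multiplicative ℕ) _ F N (natAction F t) iN) p q) :
    ∃ (a b : ℕ) (w : F), p.1 = t^[a] w ∧ q.1 = t^[b] w ∧
      (fun x => (ofAdd 1 : Multiplicative ℕ) • x)^[a] p.2 =
      (fun x => (ofAdd 1 : Multiplicative ℕ) • x)^[b] q.2 := by
  set s : N → N := fun x => (ofAdd 1 : Multiplicative ℕ) • x with hs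
  induction h with
  | rel p q hpq =>
    obtain ⟨a, m, n, hp, hq⟩ := hpq
    refine ⟨a.toAdd, 0, m, ?_, ?_, ?_⟩
    · rw [hp]; rfl
    · rw [hq]; rfl
    · rw [hp, hq]
      exact (smul_iter a n).symm
  | refl p => exact ⟨0, 0, p.1, rfl, rfl, rfl⟩
  | symm p q _ ih =>
    obtain ⟨a, b, w, h1, h2, h3⟩ := ih
    exact ⟨b, a, w, h2, h1, h3.symm⟩
  | trans p q r _ _ ih1 ih2 =>
    obtain ⟨a, b, w, h1, h2, h3⟩ := ih1
    obtain ⟨c, d, v, h4, h5, h6⟩ := ih2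
    rcases le_total c b with hcb | hbc
    · have hv : v = t^[b - c] w := by
        apply ht.iterate c
        rw [← h4, h2, ← Function.iterate_add_apply, Nat.add_sub_cancel' hcb]
      refine ⟨a, d + (b - c), w, h1, ?_, ?_⟩
      · rw [h5, hv, ← Function.iterate_add_apply]
      · rw [h3, Nat.add_comm d, Function.iterate_add_apply, ← h6,
          ← Function.iterate_add_apply, Nat.sub_add_cancel hcb]
    · have hw : w = t^[c - b] v := by
        apply ht.iterate b
        rw [← h2, h4, ← Function.iterate_add_apply, Nat.add_sub_cancel' hbc]
      refine ⟨a + (c - b), d, v, ?_, h5, ?_⟩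
      · rw [h1, hw, ← Function.iterate_add_apply]
      · rw [Nat.add_comm a, Function.iterate_add_apply, h3,
          ← Function.iterate_add_apply, Nat.sub_add_cancel hbc, h6]

end helpers

section fwd
open Multiplicative Function

private lemma natAction_smul {X : Type*} (t : X → X) (a : Multiplicative ℕ) (x : X) :
    @SMul.smul _ _ (@SemigroupAction.toSMul _ _ _ <| @MulAction.toSemigroupAction _ _ _ (natAction X t)) a x = t^[a.toAdd] x := rfl

private lemma natAction_hsmul {X : Type*} (t : X → X) (a : Multiplicative ℕ) (x : X) :
    @HSMul.hSMul _ _ _ (@instHSMul _ _ (@SemigroupAction.toSMul _ _ _ <| @MulAction.toSemigroupAction _ _ _ (natAction X t))) a x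
      = t^[a.toAdd] x := rfl

private def uS : ULift.{v} ℕ → ULift.{v} ℕ := fun k => ULift.up (k.down + 1)

private lemma uS_iter (j : ℕ) (k : ULift.{v} ℕ) : uS^[j] k = ULift.up (k.down + j) := by
  induction j with
  | zero => simp
  | succ j ih => rw [iterate_succ_apply', ih]; simp [uS]; omega

private def uF : ULift.{v} ℕ → ULift.{w} ℕ := fun k => ULift.up (k.down + 1)

private lemma uF_equiv (a : Multiplicative ℕ) (k : ULift.{v} ℕ) :
    uF.{v, w} (@HSMul.hSMul _ _ _ (@instHSMul _ _ (@SemigroupAction.toSMul _ _ _ <| @MulAction.toSemigroupAction _ _ _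
        (natAction _ uS))) a k)
      = @HSMul.hSMul _ _ _ (@instHSMul _ _ (@SemigroupAction.toSMul _ _ _ <| @MulAction.toSemigroupAction _ _ _
        (natAction _ uS))) a (uF k) := by
  show uF (uS^[a.toAdd] k) = uS^[a.toAdd] (uF k)
  rw [uS_iter, uS_iter]
  show ULift.up (k.down + a.toAdd + 1) = ULift.up (k.down + 1 + a.toAdd)
  congr 1
  omega

private lemma uF_inj : Function.Injective uF.{v, w} := by
  intro a b hab
  cases a; cases b
  simpa [uF] using hab

private lemma flat_imp_inj {M : Type u} (t : M → M)
    (hinj : Function.Injective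
      (@MonTensor.map (Multiplicative ℕ) _ M (ULift.{v} ℕ) (ULift.{w} ℕ) (natAction M t)
        (natAction _ uS) (natAction _ uS) uF uF_equiv)) : Function.Injective t := by
  letI iM : MulAction (Multiplicative ℕ) M := natAction M t
  letI iU1 : MulAction (Multiplicative ℕ) (ULift.{v} ℕ) := natAction _ uS
  letI iU2 : MulAction (Multiplicative ℕ) (ULift.{w} ℕ) := natAction _ uS
  intro x y hxy
  have e : ∀ z : M,
      Quot.mk (@MonTensor.Rel (Multiplicative ℕ) _ M (ULift.{w} ℕ) iM iU2)
        (t z, ULift.up 0) = Quot.mk _ (z, ULift.up 1) := fun z =>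
    Quot.sound ⟨Multiplicative.ofAdd 1, z, ULift.up 0, rfl, rfl⟩
  have key : ∀ (p q : M × ULift.{v} ℕ),
      @MonTensor.Rel (Multiplicative ℕ) _ M (ULift.{v} ℕ) iM iU1 p q →
      t^[p.2.down] p.1 = t^[q.2.down] q.1 := by
    rintro p q ⟨a, m, n, hp, hq⟩
    rw [hp, hq]
    show t^[n.down] (t^[a.toAdd] m) = t^[(uS^[a.toAdd] n).down] m
    rw [uS_iter, ← Function.iterate_add_apply]
  have h1 : @MonTensor.map (Multiplicative ℕ) _ M (ULift.{v} ℕ) (ULift.{w} ℕ) (natAction M t)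
        (natAction _ uS) (natAction _ uS) uF uF_equiv (Quot.mk _ (x, ULift.up 0)) =
      @MonTensor.map (Multiplicative ℕ) _ M (ULift.{v} ℕ) (ULift.{w} ℕ) (natAction M t)
        (natAction _ uS) (natAction _ uS) uF uF_equiv (Quot.mk _ (y, ULift.up 0)) := by
    show Quot.mk _ (x, uF (ULift.up 0)) = Quot.mk _ (y, uF (ULift.up 0))
    show Quot.mk _ (x, (ULift.up 1 : ULift.{w} ℕ)) = Quot.mk _ (y, ULift.up 1)
    rw [← e x, ← e y, hxy]
  have h2 := hinj h1
  have h3 := congrArg (Quot.lift (fun p => t^[p.2.down] p.1) key) h2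
  simpa using h3


/-- A module `M` over the free commutative monoid `C₊ = (ℕ,+)` on one
generator `τ`, given by a self-map `t : M → M`, is flat iff `t` is injective. -/
theorem stmt_9 (M : Type*) (t : M → M) :
    @MonIsFlat (Multiplicative ℕ) _ M (natAction M t) ↔ Function.Injective t := by
  constructor
  · intro hflat
    exact flat_imp_inj t
      (hflat (ULift ℕ) (ULift ℕ) (natAction _ uS) (natAction _ uS) uF uF_equiv uF_inj)
  · intro ht M' N' iM' iN' f hf hinj
    letI : MulAction (Multiplicative ℕ) M := natAction M t
    letI := iM'; letI := iN'
    intro x y hxy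
    obtain ⟨px, rfl⟩ := Quot.exists_rep x
    obtain ⟨py, rfl⟩ := Quot.exists_rep y
    have hxy' : Relation.EqvGen (MonTensor.Rel (Multiplicative ℕ) M N')
        (px.1, f px.2) (py.1, f py.2) := by
      rw [← Quot.eq]
      exact hxy
    obtain ⟨a, b, w, h1, h2, h3⟩ := eqvGen_char t ht hxy'
    have hcomm : ∀ (k : ℕ) (m : M'),
        (fun x => (Multiplicative.ofAdd 1 : Multiplicative ℕ) • x)^[k] (f m) =
        f ((fun x => (Multiplicative.ofAdd 1 : Multiplicative ℕ) • x)^[k] m) := by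
      intro k
      induction k with
      | zero => intro m; rfl
      | succ k ih =>
        intro m
        rw [Function.iterate_succ_apply, Function.iterate_succ_apply, ← hf, ih]
    rw [hcomm, hcomm] at h3
    have h3' := hinj h3
    have e1 : Quot.mk (MonTensor.Rel (Multiplicative ℕ) M M') px =
        Quot.mk _ (w, (fun x => (Multiplicative.ofAdd 1 : Multiplicative ℕ) • x)^[a] px.2) := by
      have hpx : px = (t^[a] w, px.2) := by rw [← h1]
      refine Quot.sound ⟨Multiplicative.ofAdd a, w, px.2, ?_, ?_⟩
      · exact hpx
      · rw [smul_iter]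
        simp
    have e2 : Quot.mk (MonTensor.Rel (Multiplicative ℕ) M M') py =
        Quot.mk _ (w, (fun x => (Multiplicative.ofAdd 1 : Multiplicative ℕ) • x)^[b] py.2) := by
      have hpy : py = (t^[b] w, py.2) := by rw [← h2]
      refine Quot.sound ⟨Multiplicative.ofAdd b, w, py.2, ?_, ?_⟩
      · exact hpy
      · rw [smul_iter]
        simp
    rw [e1, e2, h3']
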